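/- Kadell's q-analog conjecture fails: for n = 2, I = {0}, J = {1}, a_0 = a_1 = a_2 = 1, one has CT_x [(1 - x_0/x_1)(1 - q x_1/x_0)(1 - q^2 x_1/x_0)(1 - x_0/x_2)(1 - q x_2/x_0)(1 - x_1/x_2)(1 - q x_2/x_1)] = 1 + 2q + 3q^2 + 2q^3, and consequently (1 - q^3)(1 + 2q + 3q^2 + 2q^3) ≠ (1 - q^4)(1 + q)(1 + q + q^2) as polynomials in q. -/

import Mathlib

open Finsupp Polynomial
noncomputable section
abbrev Lau := AddMonoidAlgebra (Polynomial ℚ) (Fin 3 →₀ ℤ)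
def q : Polynomial ℚ := Polynomial.X
def sc (c : Polynomial ℚ) : Lau := AddMonoidAlgebra.single 0 c
/-- the Laurent monomial `x_i / x_j` -/
def r (i j : Fin 3) : Lau := AddMonoidAlgebra.single (single i 1 - single j 1) 1
def CT (f : Lau) : Polynomial ℚ := f.coeff 0

lemma CT_sub (f g : Lau) : CT (f - g) = CT f - CT g := by
  simp only [CT, AddMonoidAlgebra.coeff_sub, Finsupp.sub_apply]
lemma CT_add (f g : Lau) : CT (f + g) = CT f + CT g := by
  simp only [CT, AddMonoidAlgebra.coeff_add, Finsupp.add_apply]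
lemma CT_single (a : Fin 3 →₀ ℤ) (c : Polynomial ℚ) :
    CT (AddMonoidAlgebra.single a c) = if a = 0 then c else 0 := by
  simp only [CT, AddMonoidAlgebra.coeff_single, Finsupp.single_apply]

set_option maxHeartbeats 4000000 in
/-- The counterexample to Kadell's q-analog conjecture:
`n = 2`, `I = {0}`, `J = {1}`, `a₀ = a₁ = a₂ = 1`. -/
theorem kadell_q_conjecture_fails :
    CT ((1 - r 0 1) * (1 - sc q * r 1 0) * (1 - sc (q^2) * r 1 0) *
        (1 - r 0 2) * (1 - sc q * r 2 0) * (1 - r 1 2) * (1 - sc q * r 2 1)) =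
      1 + 2 * q + 3 * q^2 + 2 * q^3 ∧
    (1 - q^3) * (1 + 2 * q + 3 * q^2 + 2 * q^3) ≠
      (1 - q^4) * (1 + q) * (1 + q + q^2) := by
  constructor
  · simp only [sc, r, AddMonoidAlgebra.one_def, sub_mul, mul_sub,
      AddMonoidAlgebra.single_mul_single]
    simp only [CT_sub, CT_add, CT_single]
    norm_num [Finsupp.ext_iff, Fin.forall_fin_succ, Finsupp.sub_apply,
      Finsupp.add_apply, Finsupp.single_apply,
      show (2:Fin 3) ≠ 0 by decide, show (2:Fin 3) ≠ 1 by decide,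
      show (0:Fin 3) ≠ 2 by decide, show (1:Fin 3) ≠ 2 by decide,
      show (0:Fin 3) ≠ 1 by decide, show (1:Fin 3) ≠ 0 by decide]
    ring
  · intro h
    simp only [q] at h
    ring_nf at h
    have h2 := congrArg (Polynomial.coeff · 2) h
    simp [Polynomial.coeff_one, Polynomial.coeff_X_pow] at h2
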